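/- Let f: {0,1}^n → {0,1} and T ⊆ [n] with Var_{[n]\T}(f) ≤ cε for ε > 0 and c ∈ (0, 1/8). Then for w chosen uniformly from {0,1}^{[n]\T}, Pr_w[ distance(f_{T,w}, f) ≥ ε/2 ] ≤ 8c. -/

import Mathlib

open Finset
open scoped Classical

variable {n : ℕ}

/-- Combine `z` (on coordinates in `T`) with `w` (outside `T`). -/
def combine (T : Finset (Fin n)) (z w : Fin n → Bool) : Fin n → Bool :=
  fun i => if i ∈ T then z i else w i

/-- `p_z`: probability over uniform `w` that `f(z_T ∘ w) = 1`. -/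
noncomputable def pz (f : (Fin n → Bool) → Bool) (T : Finset (Fin n)) (z : Fin n → Bool) : ℝ :=
  ((Finset.univ.filter (fun w : Fin n → Bool => f (combine T z w) = true)).card : ℝ) / 2 ^ n

/-- `Var_{[n]\T}(f) = E_z[ p_z (1 - p_z) ]`. -/
noncomputable def varNT (f : (Fin n → Bool) → Bool) (T : Finset (Fin n)) : ℝ :=
  (∑ z : Fin n → Bool, pz f T z * (1 - pz f T z)) / 2 ^ n

/-- Normalized Hamming distance between Boolean functions. -/
noncomputable def dist01 (f g : (Fin n → Bool) → Bool) : ℝ :=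
  ((Finset.univ.filter (fun x : Fin n → Bool => f x ≠ g x)).card : ℝ) / 2 ^ n

/-- Partial order w.r.t. directions `B` (`true` = up, `false` = down). -/
def precB (B : Fin n → Bool) (x y : Fin n → Bool) : Prop :=
  ∀ i, if B i = true then x i ≤ y i else y i ≤ x i

/-- `f` is monotone with respect to the directions `B`. -/
def MonotoneWrt (f : (Fin n → Bool) → Bool) (B : Fin n → Bool) : Prop :=
  ∀ x y, precB B x y → f x ≤ f y

/-- `f` is unate: monotone w.r.t. some directions. -/
def Unate (f : (Fin n → Bool) → Bool) : Prop := ∃ B, MonotoneWrt f B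

/-- Fiber-wise majority of `f` over `T` (ties broken toward 0). -/
noncomputable def majT (f : (Fin n → Bool) → Bool) (T : Finset (Fin n)) : (Fin n → Bool) → Bool :=
  fun z => if 1 / 2 < pz f T z then true else false

/-- Restriction of `f` fixing the coordinates outside `T` to `w`. -/
def fRes (f : (Fin n → Bool) → Bool) (T : Finset (Fin n)) (w : Fin n → Bool) :
    (Fin n → Bool) → Bool := fun x => f (combine T x w)

/-- Hamming distance between points of the cube. -/
def ham (x y : Fin n → Bool) : ℕ := (Finset.univ.filter (fun i => x i ≠ y i)).card

section Aux

variable (f : (Fin n → Bool) → Bool) (T : Finset (Fin n))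

lemma combine_combine (z w w' : Fin n → Bool) :
    combine T (combine T z w) w' = combine T z w' := by
  funext i
  simp only [combine]
  split <;> rfl

lemma pz_combine (z w : Fin n → Bool) : pz f T (combine T z w) = pz f T z := by
  simp only [pz, combine_combine]

lemma majT_combine (z w : Fin n → Bool) :
    majT f T (combine T z w) = majT f T z := by
  simp only [majT, pz_combine]

lemma sum_combine (φ : (Fin n → Bool) → ℝ) :
    ∑ z : Fin n → Bool, ∑ w : Fin n → Bool, φ (combine T z w)
      = 2 ^ n * ∑ y : Fin n → Bool, φ y := by
  have hinv : ∀ p : (Fin n → Bool) × (Fin n → Bool),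
      (combine T (combine T p.1 p.2) (combine T p.2 p.1),
       combine T (combine T p.2 p.1) (combine T p.1 p.2)) = p := by
    rintro ⟨z, w⟩
    simp only [Prod.mk.injEq]
    constructor <;> (funext i; simp only [combine]; split <;> rfl)
  let e : ((Fin n → Bool) × (Fin n → Bool)) ≃ ((Fin n → Bool) × (Fin n → Bool)) :=
    { toFun := fun p => (combine T p.1 p.2, combine T p.2 p.1)
      invFun := fun p => (combine T p.1 p.2, combine T p.2 p.1)
      left_inv := hinv
      right_inv := hinv }
  calc ∑ z : Fin n → Bool, ∑ w : Fin n → Bool, φ (combine T z w)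
      = ∑ p : (Fin n → Bool) × (Fin n → Bool), φ (combine T p.1 p.2) := by
        rw [Fintype.sum_prod_type]
    _ = ∑ p : (Fin n → Bool) × (Fin n → Bool), φ p.1 :=
        Fintype.sum_equiv e _ _ (fun p => rfl)
    _ = 2 ^ n * ∑ y : Fin n → Bool, φ y := by
        rw [Fintype.sum_prod_type]
        simp only [Finset.sum_const, Finset.card_univ, Fintype.card_fun,
          Fintype.card_bool, Fintype.card_fin, nsmul_eq_mul]
        rw [← Finset.mul_sum]
        push_cast
        ring

lemma pz_nonneg (z : Fin n → Bool) : 0 ≤ pz f T z := by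
  unfold pz; positivity

lemma pz_le_one (z : Fin n → Bool) : pz f T z ≤ 1 := by
  unfold pz
  rw [div_le_one (by positivity)]
  calc ((Finset.univ.filter
        (fun w : Fin n → Bool => f (combine T z w) = true)).card : ℝ)
      ≤ (Finset.univ : Finset (Fin n → Bool)).card := by
        exact_mod_cast Finset.card_le_card (Finset.filter_subset _ _)
    _ = 2 ^ n := by
        simp [Finset.card_univ]

lemma pz_sum (z : Fin n → Bool) :
    ∑ w : Fin n → Bool, (if f (combine T z w) = true then (1:ℝ) else 0)
      = pz f T z * 2 ^ n := by
  rw [Finset.sum_boole, pz, div_mul_cancel₀]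
  positivity

lemma sum_ne_majT_le (z : Fin n → Bool) :
    ∑ w : Fin n → Bool, (if f (combine T z w) ≠ majT f T z then (1:ℝ) else 0)
      ≤ 2 ^ n * (2 * pz f T z * (1 - pz f T z)) := by
  have hN : (0:ℝ) < 2 ^ n := by positivity
  have hq0 := pz_nonneg f T z
  have hq1 := pz_le_one f T z
  by_cases hb : 1 / 2 < pz f T z
  · have hMaj : majT f T z = true := by rw [majT, if_pos hb]
    have hsum : ∑ w : Fin n → Bool, (if f (combine T z w) ≠ majT f T z then (1:ℝ) else 0)
        = ∑ w : Fin n → Bool, (1 - (if f (combine T z w) = true then (1:ℝ) else 0)) := by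
      refine Finset.sum_congr rfl fun w _ => ?_
      rw [hMaj]
      by_cases hf : f (combine T z w) = true <;> simp [hf]
    rw [hsum, Finset.sum_sub_distrib, pz_sum, Finset.sum_const, Finset.card_univ]
    simp only [Fintype.card_fun, Fintype.card_bool, Fintype.card_fin, nsmul_eq_mul, mul_one]
    push_cast
    nlinarith [mul_nonneg (mul_nonneg hN.le (sub_nonneg.2 hq1))
      (by linarith : (0:ℝ) ≤ 2 * pz f T z - 1)]
  · have hMaj : majT f T z = false := by rw [majT, if_neg hb]
    have hsum : ∑ w : Fin n → Bool, (if f (combine T z w) ≠ majT f T z then (1:ℝ) else 0)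
        = ∑ w : Fin n → Bool, (if f (combine T z w) = true then (1:ℝ) else 0) := by
      refine Finset.sum_congr rfl fun w _ => ?_
      rw [hMaj]
      by_cases hf : f (combine T z w) = true <;> simp [hf]
    rw [hsum, pz_sum]
    push_neg at hb
    nlinarith [mul_nonneg (mul_nonneg hN.le hq0)
      (by linarith : (0:ℝ) ≤ 1 - 2 * pz f T z)]

lemma dist01_nonneg (g h : (Fin n → Bool) → Bool) : 0 ≤ dist01 g h := by
  unfold dist01; positivity

lemma dist01_triangle (a b c : (Fin n → Bool) → Bool) :
    dist01 a c ≤ dist01 a b + dist01 b c := by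
  unfold dist01
  rw [← add_div]
  have hN : (0:ℝ) < 2 ^ n := by positivity
  have hsub : (Finset.univ.filter fun x : Fin n → Bool => a x ≠ c x)
      ⊆ (Finset.univ.filter fun x : Fin n → Bool => a x ≠ b x)
        ∪ (Finset.univ.filter fun x : Fin n → Bool => b x ≠ c x) := by
    intro x hx
    simp only [Finset.mem_filter, Finset.mem_union, Finset.mem_univ, true_and] at *
    by_cases h : a x = b x
    · exact Or.inr (h ▸ hx)
    · exact Or.inl h
  have key : ((Finset.univ.filter fun x : Fin n → Bool => a x ≠ c x).card : ℝ)
      ≤ ((Finset.univ.filter fun x : Fin n → Bool => a x ≠ b x).card : ℝ)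
        + ((Finset.univ.filter fun x : Fin n → Bool => b x ≠ c x).card : ℝ) := by
    calc ((Finset.univ.filter fun x : Fin n → Bool => a x ≠ c x).card : ℝ)
        ≤ (((Finset.univ.filter fun x : Fin n → Bool => a x ≠ b x)
            ∪ (Finset.univ.filter fun x : Fin n → Bool => b x ≠ c x)).card : ℝ) := by
          exact_mod_cast Finset.card_le_card hsub
      _ ≤ _ := by exact_mod_cast Finset.card_union_le _ _
  gcongr

lemma dist01_eq_sum (g h : (Fin n → Bool) → Bool) :
    dist01 g h = (∑ x : Fin n → Bool, if g x ≠ h x then (1:ℝ) else 0) / 2 ^ n := by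
  rw [dist01, Finset.sum_boole]

end Aux

/-- Claim 2: `Pr_w[distance(f_{T,w}, f) ≥ ε/2] ≤ 8c`. -/
theorem prob_restriction_far_le {n : ℕ} (f : (Fin n → Bool) → Bool) (T : Finset (Fin n))
    (ε c : ℝ) (hε : 0 < ε) (hc0 : 0 < c) (hc1 : c < 1 / 8)
    (hvar : varNT f T ≤ c * ε) :
    ((Finset.univ.filter (fun w : Fin n → Bool =>
        ε / 2 ≤ dist01 (fRes f T w) f)).card : ℝ) / 2 ^ n ≤ 8 * c := by
  have hN : (0:ℝ) < 2 ^ n := by positivity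
  have hvarsum : ∑ z : Fin n → Bool, pz f T z * (1 - pz f T z) = varNT f T * 2 ^ n := by
    rw [varNT, div_mul_cancel₀]
    positivity
  have hsumbound : ∑ z : Fin n → Bool, 2 ^ n * (2 * pz f T z * (1 - pz f T z))
      = 2 ^ n * (2 * (varNT f T * 2 ^ n)) := by
    rw [← Finset.mul_sum]
    congr 1
    rw [← hvarsum, Finset.mul_sum]
    exact Finset.sum_congr rfl fun z _ => by ring
  -- bound on dist01 (majT f T) f
  have hA : dist01 (majT f T) f ≤ 2 * (c * ε) := by
    have h1 : dist01 (majT f T) f * 2 ^ n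
        = ∑ y : Fin n → Bool, (if majT f T y ≠ f y then (1:ℝ) else 0) := by
      rw [dist01_eq_sum, div_mul_cancel₀]
      positivity
    have h2 : 2 ^ n * ∑ y : Fin n → Bool, (if majT f T y ≠ f y then (1:ℝ) else 0)
        = ∑ z : Fin n → Bool, ∑ w : Fin n → Bool,
            (if f (combine T z w) ≠ majT f T z then (1:ℝ) else 0) := by
      rw [← sum_combine T (fun y => if majT f T y ≠ f y then (1:ℝ) else 0)]
      refine Finset.sum_congr rfl fun z _ => Finset.sum_congr rfl fun w _ => ?_
      rw [majT_combine]
      exact if_congr ne_comm rfl rfl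
    have h3 : ∑ z : Fin n → Bool, ∑ w : Fin n → Bool,
          (if f (combine T z w) ≠ majT f T z then (1:ℝ) else 0)
        ≤ ∑ z : Fin n → Bool, 2 ^ n * (2 * pz f T z * (1 - pz f T z)) :=
      Finset.sum_le_sum fun z _ => sum_ne_majT_le f T z
    have h5 : 2 ^ n * (dist01 (majT f T) f * 2 ^ n)
        ≤ 2 ^ n * (2 * (varNT f T * 2 ^ n)) := by
      rw [h1, h2, ← hsumbound]
      exact h3
    have h6 : dist01 (majT f T) f ≤ 2 * varNT f T := by
      have h7 := le_of_mul_le_mul_left h5 hN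
      nlinarith
    linarith
  -- expected distance from the restriction to the majority
  have hB : ∑ w : Fin n → Bool, dist01 (fRes f T w) (majT f T)
      ≤ 2 * (c * ε) * 2 ^ n := by
    have h1 : (∑ w : Fin n → Bool, dist01 (fRes f T w) (majT f T)) * 2 ^ n
        = ∑ w : Fin n → Bool, ∑ x : Fin n → Bool,
            (if f (combine T x w) ≠ majT f T x then (1:ℝ) else 0) := by
      rw [Finset.sum_mul]
      refine Finset.sum_congr rfl fun w _ => ?_
      rw [dist01_eq_sum, div_mul_cancel₀ _ (by positivity : (2:ℝ) ^ n ≠ 0)]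
      exact Finset.sum_congr rfl fun x _ => rfl
    have h2 : ∑ w : Fin n → Bool, ∑ x : Fin n → Bool,
          (if f (combine T x w) ≠ majT f T x then (1:ℝ) else 0)
        = ∑ x : Fin n → Bool, ∑ w : Fin n → Bool,
          (if f (combine T x w) ≠ majT f T x then (1:ℝ) else 0) := Finset.sum_comm
    have h3 : ∑ x : Fin n → Bool, ∑ w : Fin n → Bool,
          (if f (combine T x w) ≠ majT f T x then (1:ℝ) else 0)
        ≤ ∑ x : Fin n → Bool, 2 ^ n * (2 * pz f T x * (1 - pz f T x)) :=
      Finset.sum_le_sum fun x _ => sum_ne_majT_le f T x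
    have h5 : (∑ w : Fin n → Bool, dist01 (fRes f T w) (majT f T)) * 2 ^ n
        ≤ (2 * (c * ε) * 2 ^ n) * 2 ^ n := by
      rw [h1, h2]
      refine h3.trans ?_
      rw [hsumbound]
      nlinarith [mul_le_mul_of_nonneg_right (mul_le_mul_of_nonneg_right hvar hN.le) hN.le]
    exact le_of_mul_le_mul_right h5 hN
  set G := Finset.univ.filter (fun w : Fin n → Bool =>
      ε / 2 ≤ dist01 (fRes f T w) f) with hG
  have hmem : ∀ w ∈ G, ε / 4 ≤ dist01 (fRes f T w) (majT f T) := by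
    intro w hw
    rw [hG, Finset.mem_filter] at hw
    have htri := dist01_triangle (fRes f T w) (majT f T) f
    have h2c : 2 * (c * ε) ≤ ε / 4 := by nlinarith
    linarith [hw.2]
  have hmarkov : (G.card : ℝ) * (ε / 4)
      ≤ ∑ w : Fin n → Bool, dist01 (fRes f T w) (majT f T) := by
    calc (G.card : ℝ) * (ε / 4) = ∑ _w ∈ G, (ε / 4) := by
          rw [Finset.sum_const, nsmul_eq_mul]
      _ ≤ ∑ w ∈ G, dist01 (fRes f T w) (majT f T) := Finset.sum_le_sum hmem
      _ ≤ ∑ w : Fin n → Bool, dist01 (fRes f T w) (majT f T) :=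
          Finset.sum_le_sum_of_subset_of_nonneg (Finset.subset_univ _)
            (fun w _ _ => dist01_nonneg _ _)
  rw [div_le_iff₀ hN]
  nlinarith [hB, hmarkov, hε, hN]
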